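/- arXiv:1401.4840 — 4 statements merged into one kernel-verified Lean document; each statement's English description precedes it below -/
import Mathlib

section
/- A well-formed deterministic three-counter machine M halts (started from state 0 with all three counters equal to 0) if and only if the set { e(run n) : n ∈ ℕ } of encodings of the configurations occurring in its run is finite. -/
/-- A counter move: increment, decrement, or keep unchanged. -/
inductive Move : Type
  | inc : Move
  | dec : Move
  | keep : Move

/-- Applying a move to a counter value. -/
def Move.apply : Move → ℕ → ℕ
  | Move.inc, n => n + 1
  | Move.dec, n => n - 1
  | Move.keep, n => n

/-- A deterministic three-counter machine with `m` states: a partial transition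
function taking the current state and the zero-flags of the first two counters,
and returning (if defined) the new state and the moves for the first two counters
(the third counter is always incremented). -/
structure CM3 (m : ℕ) where
  δ : Fin m × Bool × Bool → Option (Fin m × Move × Move)

/-- One step of the machine on a configuration `(q, c₁, c₂, c₃)`; a halting
configuration is mapped to itself. -/
def CM3.step {m : ℕ} (M : CM3 m) (c : Fin m × ℕ × ℕ × ℕ) : Fin m × ℕ × ℕ × ℕ :=
  match M.δ (c.1, decide (c.2.1 = 0), decide (c.2.2.1 = 0)) with
  | none => c
  | some (q', m₁, m₂) => (q', m₁.apply c.2.1, m₂.apply c.2.2.1, c.2.2.2 + 1)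

/-- A machine is well-formed if it never prescribes decrementing a counter whose
zero-flag argument is true. -/
def CM3.WellFormed {m : ℕ} (M : CM3 m) : Prop :=
  ∀ q b₁ b₂ q' m₁ m₂, M.δ (q, b₁, b₂) = some (q', m₁, m₂) →
    (b₁ = true → m₁ ≠ Move.dec) ∧ (b₂ = true → m₂ ≠ Move.dec)

/-- A configuration is halting if no instruction is applicable. -/
def CM3.IsHalting {m : ℕ} (M : CM3 m) (c : Fin m × ℕ × ℕ × ℕ) : Prop :=
  M.δ (c.1, decide (c.2.1 = 0), decide (c.2.2.1 = 0)) = none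

/-- The run of the machine, started in state `0` with all three counters equal to `0`. -/
def CM3.run {m : ℕ} (hm : 0 < m) (M : CM3 m) : ℕ → Fin m × ℕ × ℕ × ℕ
  | 0 => (⟨0, hm⟩, 0, 0, 0)
  | n + 1 => M.step (M.run hm n)

/-- The encoding `e(q, c₁, c₂, c₃) = p_{q+1} · p_{m+1}^{c₁} · p_{m+2}^{c₂} · p_{m+3}^{c₃}`,
where `p_1 < p_2 < …` are the primes, i.e. `p_{j+1} = Nat.nth Nat.Prime j`. -/
noncomputable def enc (m : ℕ) (c : Fin m × ℕ × ℕ × ℕ) : ℕ :=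
  Nat.nth Nat.Prime (c.1 : ℕ) * (Nat.nth Nat.Prime m) ^ c.2.1 *
    (Nat.nth Nat.Prime (m + 1)) ^ c.2.2.1 * (Nat.nth Nat.Prime (m + 2)) ^ c.2.2.2

lemma prime_nth (i : ℕ) : (Nat.nth Nat.Prime i).Prime :=
  Nat.nth_mem_of_infinite Nat.infinite_setOf_prime i

lemma nth_prime_injective : Function.Injective (Nat.nth Nat.Prime) :=
  Nat.nth_injective Nat.infinite_setOf_prime

lemma enc_factorization (m : ℕ) (c : Fin m × ℕ × ℕ × ℕ) :
    (enc m c).factorization (Nat.nth Nat.Prime (m + 2)) = c.2.2.2 := by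
  have h1 : Nat.nth Nat.Prime (c.1 : ℕ) ≠ Nat.nth Nat.Prime (m + 2) := by
    intro h; have := nth_prime_injective h; omega
  have h2 : Nat.nth Nat.Prime m ≠ Nat.nth Nat.Prime (m + 2) := by
    intro h; have := nth_prime_injective h; omega
  have h3 : Nat.nth Nat.Prime (m + 1) ≠ Nat.nth Nat.Prime (m + 2) := by
    intro h; have := nth_prime_injective h; omega
  have p0 := prime_nth (c.1 : ℕ)
  have pm := prime_nth m
  have pm1 := prime_nth (m + 1)
  have pm2 := prime_nth (m + 2)
  have ne0 : Nat.nth Nat.Prime (c.1 : ℕ) ≠ 0 := p0.ne_zero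
  have nem : Nat.nth Nat.Prime m ≠ 0 := pm.ne_zero
  have nem1 : Nat.nth Nat.Prime (m + 1) ≠ 0 := pm1.ne_zero
  have nem2 : Nat.nth Nat.Prime (m + 2) ≠ 0 := pm2.ne_zero
  unfold enc
  rw [Nat.factorization_mul (by positivity) (by positivity),
    Nat.factorization_mul (by positivity) (by positivity),
    Nat.factorization_mul (by positivity) (by positivity),
    Nat.factorization_pow, Nat.factorization_pow, Nat.factorization_pow,
    p0.factorization, pm.factorization, pm1.factorization, pm2.factorization]
  simp [Finsupp.single_apply, h1, h2, h3]

/-- If the run never halts, the third counter equals the step count. -/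
lemma run_third (m : ℕ) (hm : 0 < m) (M : CM3 m)
    (h : ∀ n, ¬ M.IsHalting (M.run hm n)) (n : ℕ) :
    (M.run hm n).2.2.2 = n := by
  induction n with
  | zero => rfl
  | succ k ih =>
    have hk := h k
    unfold CM3.IsHalting at hk
    show (M.step (M.run hm k)).2.2.2 = k + 1
    unfold CM3.step
    rcases ho : M.δ ((M.run hm k).1, decide ((M.run hm k).2.1 = 0),
        decide ((M.run hm k).2.2.1 = 0)) with _ | ⟨q', m₁, m₂⟩
    · exact absurd ho hk
    · simp [ih]

lemma run_halt_stable (m : ℕ) (hm : 0 < m) (M : CM3 m) (n : ℕ)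
    (h : M.IsHalting (M.run hm n)) (k : ℕ) (hk : n ≤ k) :
    M.run hm k = M.run hm n := by
  obtain ⟨d, rfl⟩ := Nat.exists_eq_add_of_le hk
  induction d with
  | zero => rfl
  | succ e ih =>
    have : M.run hm (n + (e + 1)) = M.step (M.run hm (n + e)) := rfl
    rw [this, ih (by omega)]
    unfold CM3.step
    unfold CM3.IsHalting at h
    rw [h]

/-- A well-formed deterministic three-counter machine halts (started from state `0`
with all counters `0`) if and only if the set of encodings of the configurations
occurring in its run is finite. -/
theorem CM3_halts_iff_encodings_finite (m : ℕ) (hm : 0 < m) (M : CM3 m)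
    (hwf : M.WellFormed) :
    (∃ n, M.IsHalting (M.run hm n)) ↔
      {x : ℕ | ∃ n, x = enc m (M.run hm n)}.Finite := by
  constructor
  · rintro ⟨n, hn⟩
    apply Set.Finite.subset ((Set.finite_Iic n).image (fun k => enc m (M.run hm k)))
    rintro x ⟨k, rfl⟩
    by_cases hk : k ≤ n
    · exact ⟨k, hk, rfl⟩
    · exact ⟨n, le_refl n, by rw [run_halt_stable m hm M n hn k (le_of_not_ge hk)]⟩
  · intro hfin
    by_contra hhalt
    push_neg at hhalt
    have hinj : Function.Injective (fun n => enc m (M.run hm n)) := by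
      intro a b hab
      have ha := enc_factorization m (M.run hm a)
      have hb := enc_factorization m (M.run hm b)
      simp only at hab
      rw [hab] at ha
      rw [run_third m hm M hhalt a, run_third m hm M hhalt b] at *
      omega
    have : {x : ℕ | ∃ n, x = enc m (M.run hm n)} =
        Set.range (fun n => enc m (M.run hm n)) := by
      ext x; simp [eq_comm]
    rw [this] at hfin
    exact Set.infinite_range_of_injective hinj hfin
end

section
/- For every well-formed deterministic three-counter machine M with m states, with p the product of the first m+3 primes, there exist functions Q, R : Fin p → ℕ with Q i ≥ 1 and R i ≥ 1 for all i, satisfying R (e(c) mod p) · e(step c) = Q (e(c) mod p) · e(c) for every configuration c, and such that the least subset 𝒢 of ℕ which contains 2 and is closed under the rule 'if n ∈ 𝒢 and z ∈ ℕ satisfies R (n mod p) · z = Q (n mod p) · n, then z ∈ 𝒢' equals the set { e(run n) : n ∈ ℕ }. In particular, M halts if and only if 𝒢 is finite. -/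
/-- The product `p = p₁ ⋯ p_{m+3}` of the first `m + 3` primes. -/
noncomputable def primeProd (m : ℕ) : ℕ := ∏ j ∈ Finset.range (m + 3), Nat.nth Nat.Prime j

/-- The residue `n mod p`, as an element of `Fin p` for `p = primeProd m`. -/
noncomputable def encMod (m n : ℕ) : Fin (primeProd m) :=
  ⟨n % primeProd m,
    Nat.mod_lt _ (Finset.prod_pos fun j _ => (Nat.prime_nth_prime j).pos)⟩

/-- The least subset `𝒢` of `ℕ` containing `2` and closed under the rule:
if `n ∈ 𝒢` and `z` satisfies `R (n mod p) · z = Q (n mod p) · n`, then `z ∈ 𝒢`. -/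
inductive GSet (m : ℕ) (Q R : Fin (primeProd m) → ℕ) : ℕ → Prop
  | base : GSet m Q R 2
  | step {n z : ℕ} : GSet m Q R n →
      R (encMod m n) * z = Q (encMod m n) * n → GSet m Q R z

section Aux

local notation "pr" => Nat.nth Nat.Prime

lemma pr_dvd_pr {j k : ℕ} : pr j ∣ pr k ↔ j = k := by
  rw [Nat.prime_dvd_prime_iff_eq (Nat.prime_nth_prime j) (Nat.prime_nth_prime k)]
  exact ⟨fun h => Nat.nth_injective Nat.infinite_setOf_prime h, fun h => h ▸ rfl⟩

lemma pr_dvd_pr_pow {j k a : ℕ} : pr j ∣ pr k ^ a ↔ j = k ∧ a ≠ 0 := by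
  constructor
  · intro h
    rcases Nat.eq_zero_or_pos a with rfl | ha
    · simp at h
      exact absurd h (Nat.prime_nth_prime j).one_lt.ne'
    · exact ⟨pr_dvd_pr.1 ((Nat.prime_nth_prime j).dvd_of_dvd_pow h), ha.ne'⟩
  · rintro ⟨rfl, ha⟩
    exact dvd_pow dvd_rfl ha

end Aux

section Conway

variable {m : ℕ}

local notation "pr" => Nat.nth Nat.Prime

lemma dvd_enc (c : Fin m × ℕ × ℕ × ℕ) (j : ℕ) :
    pr j ∣ enc m c ↔
      j = (c.1 : ℕ) ∨ (j = m ∧ c.2.1 ≠ 0) ∨ (j = m + 1 ∧ c.2.2.1 ≠ 0) ∨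
        (j = m + 2 ∧ c.2.2.2 ≠ 0) := by
  have hp := Nat.prime_nth_prime j
  rw [enc, hp.dvd_mul, hp.dvd_mul, hp.dvd_mul, pr_dvd_pr, pr_dvd_pr_pow, pr_dvd_pr_pow,
    pr_dvd_pr_pow]
  tauto

lemma dvd_enc_mod (c : Fin m × ℕ × ℕ × ℕ) {j : ℕ} (hj : j < m + 3) :
    pr j ∣ enc m c % primeProd m ↔ pr j ∣ enc m c :=
  Nat.dvd_mod_iff (Finset.dvd_prod_of_mem _ (Finset.mem_range.2 hj))

/-- the state-finding function -/
noncomputable def findState (m i : ℕ) : Option (Fin m) :=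
  Fin.find? (fun j => decide (pr (j : ℕ) ∣ i))

/-- the zero-flag read off from a residue -/
noncomputable def flag (k i : ℕ) : Bool :=
  decide (¬ pr k ∣ i)

def incFac : Move → ℕ → ℕ
  | Move.inc, P => P
  | _, _ => 1

def decFac : Move → ℕ → ℕ
  | Move.dec, P => P
  | _, _ => 1

/-- The Conway pair `(Q i, R i)`. -/
noncomputable def convQR (m : ℕ) (M : CM3 m) (i : ℕ) : ℕ × ℕ :=
  match findState m i with
  | none => (1, 1)
  | some j =>
    match M.δ (j, flag m i, flag (m + 1) i) with
    | none => (1, 1)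
    | some (q', m₁, m₂) =>
      (pr (q' : ℕ) * pr (m + 2) * incFac m₁ (pr m) * incFac m₂ (pr (m + 1)),
       pr (j : ℕ) * decFac m₁ (pr m) * decFac m₂ (pr (m + 1)))

lemma findState_enc (c : Fin m × ℕ × ℕ × ℕ) :
    findState m (enc m c % primeProd m) = some c.1 := by
  have key : ∀ j : Fin m, (pr (j : ℕ) ∣ enc m c % primeProd m ↔ j = c.1) := by
    intro j
    rw [dvd_enc_mod c (by omega : (j : ℕ) < m + 3), dvd_enc]
    constructor
    · have hj := j.2
      rintro (h | ⟨h, -⟩ | ⟨h, -⟩ | ⟨h, -⟩)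
      · exact Fin.ext h
      all_goals omega
    · rintro rfl; exact Or.inl rfl
  rw [findState, ← Option.mem_def, Fin.mem_find?_iff]
  exact ⟨decide_eq_true ((key c.1).2 rfl),
    fun j hj hp => absurd ((key j).1 (of_decide_eq_true hp)) (ne_of_lt hj)⟩

lemma flag_enc₁ (c : Fin m × ℕ × ℕ × ℕ) :
    flag m (enc m c % primeProd m) = decide (c.2.1 = 0) := by
  rw [flag, decide_eq_decide, dvd_enc_mod c (by omega), dvd_enc]
  have := c.1.2
  constructor
  · intro h
    by_contra hc
    exact h (Or.inr (Or.inl ⟨rfl, hc⟩))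
  · rintro h0 (h | ⟨-, h⟩ | ⟨h, -⟩ | ⟨h, -⟩) <;> omega

lemma flag_enc₂ (c : Fin m × ℕ × ℕ × ℕ) :
    flag (m + 1) (enc m c % primeProd m) = decide (c.2.2.1 = 0) := by
  rw [flag, decide_eq_decide, dvd_enc_mod c (by omega), dvd_enc]
  have := c.1.2
  constructor
  · intro h
    by_contra hc
    exact h (Or.inr (Or.inr (Or.inl ⟨rfl, hc⟩)))
  · rintro h0 (h | ⟨h, -⟩ | ⟨-, h⟩ | ⟨h, -⟩) <;> omega

lemma convQR_pos (M : CM3 m) (i : ℕ) :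
    1 ≤ (convQR m M i).1 ∧ 1 ≤ (convQR m M i).2 := by
  have hpr : ∀ k, 0 < pr k := fun k => (Nat.prime_nth_prime k).pos
  have hinc : ∀ (mv : Move) (x : ℕ), 0 < x → 0 < incFac mv x := by
    intro mv x hx; cases mv <;> simp [incFac, hx]
  have hdec : ∀ (mv : Move) (x : ℕ), 0 < x → 0 < decFac mv x := by
    intro mv x hx; cases mv <;> simp [decFac, hx]
  rcases hfs : findState m i with - | j
  · rw [convQR, hfs]; exact ⟨le_refl 1, le_refl 1⟩
  rcases hδ : M.δ (j, flag m i, flag (m + 1) i) with - | ⟨q', m₁, m₂⟩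
  · simp only [convQR, hfs, hδ]; exact ⟨le_refl 1, le_refl 1⟩
  simp only [convQR, hfs, hδ]
  exact ⟨Nat.mul_pos (Nat.mul_pos (Nat.mul_pos (hpr _) (hpr _)) (hinc _ _ (hpr _)))
      (hinc _ _ (hpr _)),
    Nat.mul_pos (Nat.mul_pos (hpr _) (hdec _ _ (hpr _))) (hdec _ _ (hpr _))⟩

lemma conway_property (M : CM3 m) (hwf : M.WellFormed) (c : Fin m × ℕ × ℕ × ℕ) :
    (convQR m M (enc m c % primeProd m)).2 * enc m (M.step c) =
      (convQR m M (enc m c % primeProd m)).1 * enc m c := by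
  obtain ⟨q, c₁, c₂, c₃⟩ := c
  have hfind := findState_enc (m := m) (q, c₁, c₂, c₃)
  have h1 := flag_enc₁ (m := m) (q, c₁, c₂, c₃)
  have h2 := flag_enc₂ (m := m) (q, c₁, c₂, c₃)
  rcases hδ : M.δ (q, decide (c₁ = 0), decide (c₂ = 0)) with - | ⟨q', m₁, m₂⟩
  · have hstep : M.step (q, c₁, c₂, c₃) = (q, c₁, c₂, c₃) := by
      simp only [CM3.step, hδ]
    rw [hstep]
    simp only [convQR, hfind, h1, h2, hδ]
  · have hstep : M.step (q, c₁, c₂, c₃) = (q', m₁.apply c₁, m₂.apply c₂, c₃ + 1) := by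
      simp only [CM3.step, hδ]
    have hw := hwf q _ _ q' m₁ m₂ hδ
    rw [hstep]
    simp only [convQR, hfind, h1, h2, hδ]
    rcases m₁ with - | - | - <;> rcases m₂ with - | - | -
    · simp only [enc, Move.apply, incFac, decFac]; ring
    · obtain ⟨k, rfl⟩ : ∃ k, c₂ = k + 1 := by
        refine Nat.exists_eq_succ_of_ne_zero fun h0 => hw.2 ?_ rfl
        simp [h0]
      simp only [enc, Move.apply, incFac, decFac, Nat.add_sub_cancel]; ring
    · simp only [enc, Move.apply, incFac, decFac]; ring
    · obtain ⟨k, rfl⟩ : ∃ k, c₁ = k + 1 := by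
        refine Nat.exists_eq_succ_of_ne_zero fun h0 => hw.1 ?_ rfl
        simp [h0]
      simp only [enc, Move.apply, incFac, decFac, Nat.add_sub_cancel]; ring
    · obtain ⟨k, rfl⟩ : ∃ k, c₁ = k + 1 := by
        refine Nat.exists_eq_succ_of_ne_zero fun h0 => hw.1 ?_ rfl
        simp [h0]
      obtain ⟨l, rfl⟩ : ∃ l, c₂ = l + 1 := by
        refine Nat.exists_eq_succ_of_ne_zero fun h0 => hw.2 ?_ rfl
        simp [h0]
      simp only [enc, Move.apply, incFac, decFac, Nat.add_sub_cancel]; ring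
    · obtain ⟨k, rfl⟩ : ∃ k, c₁ = k + 1 := by
        refine Nat.exists_eq_succ_of_ne_zero fun h0 => hw.1 ?_ rfl
        simp [h0]
      simp only [enc, Move.apply, incFac, decFac, Nat.add_sub_cancel]; ring
    · simp only [enc, Move.apply, incFac, decFac]; ring
    · obtain ⟨l, rfl⟩ : ∃ l, c₂ = l + 1 := by
        refine Nat.exists_eq_succ_of_ne_zero fun h0 => hw.2 ?_ rfl
        simp [h0]
      simp only [enc, Move.apply, incFac, decFac, Nat.add_sub_cancel]; ring
    · simp only [enc, Move.apply, incFac, decFac]; ring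

lemma enc_pos (c : Fin m × ℕ × ℕ × ℕ) : 0 < enc m c := by
  have hpr : ∀ k, 0 < pr k := fun k => (Nat.prime_nth_prime k).pos
  exact Nat.mul_pos (Nat.mul_pos (Nat.mul_pos (hpr _) (Nat.pow_pos (hpr _)))
    (Nat.pow_pos (hpr _))) (Nat.pow_pos (hpr _))

end Conway

/-- For every well-formed deterministic three-counter machine `M` with `m ≥ 1` states
there exist `Q R : Fin p → ℕ` (for `p` the product of the first `m + 3` primes), with all
values `≥ 1`, satisfying the Conway property `R (e(c) mod p) · e(step c) = Q (e(c) mod p) · e(c)`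
for every configuration `c`, such that the least set `𝒢` containing `2` and closed under the
induced rule equals the set of encodings of the configurations of the run; in particular `M`
halts if and only if `𝒢` is finite. -/
theorem conway_set_eq_run_encodings (m : ℕ) (hm : 0 < m) (M : CM3 m)
    (hwf : M.WellFormed) :
    ∃ Q R : Fin (primeProd m) → ℕ,
      (∀ i, 1 ≤ Q i) ∧ (∀ i, 1 ≤ R i) ∧
      (∀ c : Fin m × ℕ × ℕ × ℕ,
        R (encMod m (enc m c)) * enc m (M.step c) =
          Q (encMod m (enc m c)) * enc m c) ∧
      {x : ℕ | GSet m Q R x} = {x : ℕ | ∃ n, x = enc m (M.run hm n)} ∧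
      ((∃ n, M.IsHalting (M.run hm n)) ↔ {x : ℕ | GSet m Q R x}.Finite) := by
  refine ⟨fun i => (convQR m M i.1).1, fun i => (convQR m M i.1).2,
    fun i => (convQR_pos M i.1).1, fun i => (convQR_pos M i.1).2,
    fun c => conway_property M hwf c, ?_, ?_⟩
  all_goals have hconway := conway_property M hwf
  · -- set equality
    have h2 : enc m (M.run hm 0) = 2 := by
      simp [enc, CM3.run, Nat.nth_prime_zero_eq_two]
    ext x
    simp only [Set.mem_setOf_eq]
    constructor
    · intro hx
      induction hx with
      | base => exact ⟨0, h2.symm⟩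
      | @step n z hn heq ih =>
        obtain ⟨k, rfl⟩ := ih
        have hc := hconway (M.run hm k)
        refine ⟨k + 1, ?_⟩
        have := heq.trans hc.symm
        exact Nat.eq_of_mul_eq_mul_left (convQR_pos M _).2 this
    · rintro ⟨n, rfl⟩
      induction n with
      | zero => exact h2 ▸ GSet.base
      | succ k ih => exact GSet.step ih (hconway (M.run hm k))
  · -- halting iff finite; first rewrite the set
    have hset : {x : ℕ | GSet m (fun i => (convQR m M i.1).1) (fun i => (convQR m M i.1).2) x}
        = {x : ℕ | ∃ n, x = enc m (M.run hm n)} := by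
      have h2 : enc m (M.run hm 0) = 2 := by
        simp [enc, CM3.run, Nat.nth_prime_zero_eq_two]
      ext x
      simp only [Set.mem_setOf_eq]
      constructor
      · intro hx
        induction hx with
        | base => exact ⟨0, h2.symm⟩
        | @step n z hn heq ih =>
          obtain ⟨k, rfl⟩ := ih
          have hc := hconway (M.run hm k)
          exact ⟨k + 1, Nat.eq_of_mul_eq_mul_left (convQR_pos M _).2 (heq.trans hc.symm)⟩
      · rintro ⟨n, rfl⟩
        induction n with
        | zero => exact h2 ▸ GSet.base
        | succ k ih => exact GSet.step ih (hconway (M.run hm k))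
    rw [hset]
    constructor
    · rintro ⟨n₀, hhalt⟩
      have hstep0 : M.step (M.run hm n₀) = M.run hm n₀ := by
        unfold CM3.IsHalting at hhalt
        simp only [CM3.step, hhalt]
      have hconst : ∀ k, M.run hm (n₀ + k) = M.run hm n₀ := by
        intro k
        induction k with
        | zero => rfl
        | succ j ih => show M.step (M.run hm (n₀ + j)) = _ ; rw [ih, hstep0]
      refine ((Set.finite_Iic n₀).image (fun k => enc m (M.run hm k))).subset ?_
      rintro x ⟨n, rfl⟩
      rcases le_or_gt n n₀ with h | h
      · exact ⟨n, Set.mem_Iic.mpr h, rfl⟩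
      · refine ⟨n₀, Set.mem_Iic.mpr le_rfl, ?_⟩
        rw [show n = n₀ + (n - n₀) by omega, hconst]
    · intro hfin
      by_contra hnohalt
      push_neg at hnohalt
      have hc3 : ∀ n, (M.run hm n).2.2.2 = n := by
        intro n
        induction n with
        | zero => rfl
        | succ j ih =>
          have hnh := hnohalt j
          unfold CM3.IsHalting at hnh
          rcases hδ : M.δ ((M.run hm j).1, decide ((M.run hm j).2.1 = 0),
              decide ((M.run hm j).2.2.1 = 0)) with - | ⟨q', m₁, m₂⟩
          · exact absurd hδ hnh
          · show (M.step (M.run hm j)).2.2.2 = j + 1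
            simp only [CM3.step, hδ]
            exact congrArg (· + 1) ih
      obtain ⟨b, hb⟩ := hfin.bddAbove
      have hx : enc m (M.run hm (b + 1)) ∈ {x : ℕ | ∃ n, x = enc m (M.run hm n)} :=
        ⟨b + 1, rfl⟩
      have hle : enc m (M.run hm (b + 1)) ≤ b := hb hx
      have hdvd : (Nat.nth Nat.Prime (m + 2)) ^ (b + 1) ∣ enc m (M.run hm (b + 1)) := by
        rw [enc, hc3]
        exact dvd_mul_left _ _
      have hge : 2 ^ (b + 1) ≤ enc m (M.run hm (b + 1)) :=
        le_trans (Nat.pow_le_pow_left (Nat.prime_nth_prime (m + 2)).two_le _)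
          (Nat.le_of_dvd (enc_pos _) hdvd)
      have := Nat.lt_two_pow_self (n := b + 1)
      omega
end

section
/- With the truncated-path relations T, R, G and the set 𝒢 as defined (parameters p ≥ 1, k₀ ∈ ℕ, q, r : Fin p → ℕ with all values ≥ 1): if 𝒢 is infinite, then G k₀ holds (the pebble reaches the well of positivity). -/
/-- The relations `T i` on the truncated path: `T i 0 0`, and if `T i y z` then
`T i (min (y + q i) k₀) (min (z + r i) k₀)`. -/
inductive TRel (p k₀ : ℕ) (q r : Fin p → ℕ) : Fin p → ℕ → ℕ → Prop
  | zero (i : Fin p) : TRel p k₀ q r i 0 0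
  | step {i : Fin p} {y z : ℕ} : TRel p k₀ q r i y z →
      TRel p k₀ q r i (min (y + q i) k₀) (min (z + r i) k₀)

/-- The counting-modulo-`p` relation on the truncated path: `R 0 0`, and if `R i y`
then `R (i + 1) (min (y + 1) k₀)`, with cyclic addition in `Fin p`. -/
inductive RRel (p : ℕ) [NeZero p] (k₀ : ℕ) : Fin p → ℕ → Prop
  | zero : RRel p k₀ 0 0
  | step {i : Fin p} {y : ℕ} : RRel p k₀ i y → RRel p k₀ (i + 1) (min (y + 1) k₀)

/-- The pebble predicate `G` on the truncated path: `G (min 2 k₀)`, and if `R i y`,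
`G y` and `T i y z` then `G z`. -/
inductive GRel (p : ℕ) [NeZero p] (k₀ : ℕ) (q r : Fin p → ℕ) : ℕ → Prop
  | base : GRel p k₀ q r (min 2 k₀)
  | step {i : Fin p} {y z : ℕ} : RRel p k₀ i y → GRel p k₀ q r y →
      TRel p k₀ q r i y z → GRel p k₀ q r z

/-- The least subset `𝒢` of `ℕ` containing `2` and closed under the rule: if `n ∈ 𝒢`,
`(i : ℕ) = n mod p` and `n = k · q i`, then `k · r i ∈ 𝒢`. -/
inductive GSetP (p : ℕ) (q r : Fin p → ℕ) : ℕ → Prop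
  | base : GSetP p q r 2
  | step {n k : ℕ} {i : Fin p} : GSetP p q r n → (i : ℕ) = n % p →
      n = k * q i → GSetP p q r (k * r i)

lemma TRel_mul (p k₀ : ℕ) (q r : Fin p → ℕ) (i : Fin p) (m : ℕ) :
    TRel p k₀ q r i (min (m * q i) k₀) (min (m * r i) k₀) := by
  induction m with
  | zero => simpa using TRel.zero (p := p) (k₀ := k₀) (q := q) (r := r) i
  | succ m ih =>
      have h := TRel.step ih
      have h1 : min (min (m * q i) k₀ + q i) k₀ = min ((m + 1) * q i) k₀ := by
        rw [Nat.succ_mul]; omega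
      have h2 : min (min (m * r i) k₀ + r i) k₀ = min ((m + 1) * r i) k₀ := by
        rw [Nat.succ_mul]; omega
      rwa [h1, h2] at h

open Fin.NatCast

lemma RRel_nat (p : ℕ) [NeZero p] (k₀ n : ℕ) :
    RRel p k₀ (n : Fin p) (min n k₀) := by
  induction n with
  | zero => simpa using RRel.zero (p := p) (k₀ := k₀)
  | succ n ih =>
      have h := RRel.step ih
      have h1 : min (min n k₀ + 1) k₀ = min (n + 1) k₀ := by omega
      rw [h1] at h
      simpa using h

/-- If `𝒢` is infinite, then `G k₀` holds: the pebble reaches the well of positivity. -/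
theorem GRel_well_of_infinite (p k₀ : ℕ) [NeZero p] (q r : Fin p → ℕ)
    (hq : ∀ i, 1 ≤ q i) (hr : ∀ i, 1 ≤ r i)
    (hinf : {n : ℕ | GSetP p q r n}.Infinite) :
    GRel p k₀ q r k₀ := by
  have key : ∀ n, GSetP p q r n → GRel p k₀ q r (min n k₀) := by
    intro n hn
    induction hn with
    | base => exact GRel.base
    | @step n k i hn hi hk ih =>
        have hR : RRel p k₀ i (min n k₀) := by
          have := RRel_nat p k₀ n
          have hiq : (n : Fin p) = i := by
            apply Fin.ext
            rw [Fin.val_natCast, hi]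
          rwa [hiq] at this
        have hT := TRel_mul p k₀ q r i k
        rw [← hk] at hT
        exact GRel.step hR ih hT
  obtain ⟨n, hn, hge⟩ := hinf.exists_gt k₀
  have := key n hn
  rwa [min_eq_right (le_of_lt hge)] at this
end

section
/- With the path-of-length-N relations T and C as defined (parameters N, m ∈ ℕ): for every l with 1 ≤ l ≤ m and every j ∈ ℕ, C l j holds if and only if j · 2^l ≤ N · (2^l − 1) (i.e. j/N ≤ (2^l − 1)/2^l). -/
/-- The relation `T` on the path `a₀, …, a_N`: `T j j` for `1 ≤ j ≤ N`, and if
`T i j` with `i ≥ 2` and `j ≥ 1` then `T (i - 2) (j - 1)`. -/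
inductive Tpath (N : ℕ) : ℕ → ℕ → Prop
  | diag {j : ℕ} : 1 ≤ j → j ≤ N → Tpath N j j
  | step {i j : ℕ} : Tpath N i j → 2 ≤ i → 1 ≤ j → Tpath N (i - 2) (j - 1)

/-- The relation `C` (first argument: level, second: position): `C l 0` for every
`l ≤ m`, and if `T i j`, `C l i` and `l < m`, then `C (l + 1) j`. -/
inductive Cpath (N m : ℕ) : ℕ → ℕ → Prop
  | base {l : ℕ} : l ≤ m → Cpath N m l 0
  | step {i j l : ℕ} : Tpath N i j → Cpath N m l i → l < m → Cpath N m (l + 1) j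

lemma mul_sub_one_eq (N P : ℕ) : N * (P - 1) = N * P - N := by
  cases P with
  | zero => simp
  | succ p => simp [Nat.mul_succ]

lemma Tpath_mp {N i j : ℕ} (h : Tpath N i j) : i ≤ j ∧ 1 ≤ j ∧ 2 * j ≤ N + i := by
  induction h with
  | diag h1 h2 => omega
  | step h h2 h1 ih => omega

lemma Tpath_of_aux (N : ℕ) : ∀ d i j, j - i = d → i ≤ j → 1 ≤ j → 2 * j ≤ N + i →
    Tpath N i j := by
  intro d
  induction d with
  | zero =>
    intro i j hd hij hj hN
    have : i = j := by omega
    subst this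
    exact Tpath.diag hj (by omega)
  | succ d ih =>
    intro i j hd hij hj hN
    have h := ih (i + 2) (j + 1) (by omega) (by omega) (by omega) (by omega)
    have h2 := Tpath.step h (by omega) (by omega)
    simpa using h2

lemma Tpath_iff {N i j : ℕ} : Tpath N i j ↔ i ≤ j ∧ 1 ≤ j ∧ 2 * j ≤ N + i :=
  ⟨Tpath_mp, fun ⟨h1, h2, h3⟩ => Tpath_of_aux N (j - i) i j rfl h1 h2 h3⟩

lemma Cpath_zero {N m i : ℕ} (h : Cpath N m 0 i) : i = 0 := by
  cases h with
  | base _ => rfl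

lemma Cpath_mp {N m l j : ℕ} (h : Cpath N m l j) (hl : 1 ≤ l) :
    j * 2 ^ l ≤ N * (2 ^ l - 1) := by
  induction h with
  | base _ => simp
  | @step i j l hT hC hlm ih =>
    obtain ⟨h1, h2, h3⟩ := Tpath_mp hT
    rcases Nat.eq_zero_or_pos l with h0 | hpos
    · subst h0
      have hi0 : i = 0 := Cpath_zero hC
      subst hi0
      have : j * 2 ^ 1 = 2 * j := by ring
      rw [this]
      have : N * (2 ^ 1 - 1) = N := by norm_num
      rw [this]
      omega
    · have hi := ih hpos
      have hP : 1 ≤ 2 ^ l := Nat.one_le_two_pow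
      have hN : N ≤ N * 2 ^ l := Nat.le_mul_of_pos_right N (by omega)
      rw [mul_sub_one_eq] at hi
      rw [mul_sub_one_eq]
      have e1 : j * 2 ^ (l + 1) = 2 * (j * 2 ^ l) := by rw [pow_succ]; ring
      have e2 : N * 2 ^ (l + 1) = 2 * (N * 2 ^ l) := by rw [pow_succ]; ring
      have h4 : 2 * j * 2 ^ l ≤ (N + i) * 2 ^ l := Nat.mul_le_mul_right _ h3
      have e3 : 2 * j * 2 ^ l = 2 * (j * 2 ^ l) := by ring
      have e4 : (N + i) * 2 ^ l = N * 2 ^ l + i * 2 ^ l := by ring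
      omega

lemma Cpath_of {N m : ℕ} : ∀ l, 1 ≤ l → l ≤ m → ∀ j, j * 2 ^ l ≤ N * (2 ^ l - 1) →
    Cpath N m l j := by
  intro l
  induction l with
  | zero => omega
  | succ l ih =>
    intro _ hlm j hj
    rcases Nat.eq_zero_or_pos j with rfl | hjpos
    · exact Cpath.base hlm
    rcases Nat.eq_zero_or_pos l with rfl | hlpos
    · have hj' : 2 * j ≤ N := by
        have e : j * 2 ^ 1 = 2 * j := by ring
        have e2 : N * (2 ^ 1 - 1) = N := by norm_num
        omega
      have hT : Tpath N 0 j := Tpath_iff.mpr ⟨by omega, hjpos, by omega⟩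
      exact Cpath.step hT (Cpath.base (by omega)) (by omega)
    · have hP : 1 ≤ 2 ^ l := Nat.one_le_two_pow
      have hQ : 1 ≤ 2 ^ (l + 1) := Nat.one_le_two_pow
      rw [mul_sub_one_eq] at hj
      have e2 : N * 2 ^ (l + 1) = 2 * (N * 2 ^ l) := by rw [pow_succ]; ring
      have e1 : j * 2 ^ (l + 1) = 2 * (j * 2 ^ l) := by rw [pow_succ]; ring
      have hjQ : j ≤ j * 2 ^ (l + 1) := Nat.le_mul_of_pos_right j (by omega)
      have hNQ : N ≤ N * 2 ^ (l + 1) := Nat.le_mul_of_pos_right N (by omega)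
      have hNpos : 1 ≤ N := by
        by_contra hc
        have : N = 0 := by omega
        subst this
        simp at hj
        omega
      have hjN : j < N := by
        by_contra hcon
        push_neg at hcon
        have h1 : N * 2 ^ (l + 1) ≤ j * 2 ^ (l + 1) :=
          Nat.mul_le_mul_right _ hcon
        omega
      set i := 2 * j - N with hi
      have hCi : Cpath N m l i := by
        apply ih hlpos (by omega)
        rw [mul_sub_one_eq]
        have hNP : N ≤ N * 2 ^ l := Nat.le_mul_of_pos_right N (by omega)
        rcases Nat.le_total (2 * j) N with hle | hle
        · have hi0 : i = 0 := by omega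
          simp [hi0]
        · have hiN : i + N = 2 * j := by omega
          have e3 : (i + N) * 2 ^ l = (2 * j) * 2 ^ l := by rw [hiN]
          have e4 : (i + N) * 2 ^ l = i * 2 ^ l + N * 2 ^ l := by ring
          have e5 : (2 * j) * 2 ^ l = 2 * (j * 2 ^ l) := by ring
          omega
      have hT : Tpath N i j := Tpath_iff.mpr ⟨by omega, hjpos, by omega⟩
      exact Cpath.step hT hCi (by omega)

/-- For `1 ≤ l ≤ m`: `C l j` holds if and only if `j · 2^l ≤ N · (2^l − 1)`. -/
theorem Cpath_iff (N m : ℕ) (l j : ℕ) (hl : 1 ≤ l) (hlm : l ≤ m) :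
    Cpath N m l j ↔ j * 2 ^ l ≤ N * (2 ^ l - 1) :=
  ⟨fun h => Cpath_mp h hl, fun h => Cpath_of l hl hlm j h⟩
end
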